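/- arXiv:1511.09159 — 2 statements merged into one kernel-verified Lean document; each statement's English description precedes it below -/
import Mathlib

section
/- The function f(b, w) = (1/n) Σ_{i=1}^n φ_H(y_i(b + x_iᵀw)) is convex and differentiable on ℝ × ℝ^p, and its gradient ∇f is Lipschitz continuous with constant L_f = (1/(nδ)) Σ_{i=1}^n y_i²(1 + ‖x_i‖²), i.e., ‖∇f(u) − ∇f(û)‖ ≤ L_f ‖u − û‖ for all u = (b, w) and û = (b̂, ŵ) in ℝ × ℝ^p. -/
open scoped RealInnerProductSpace

/-- The huberized hinge loss. -/
noncomputable def phiH (δ t : ℝ) : ℝ :=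
  if 1 < t then 0 else if 1 - δ < t then (1 - t) ^ 2 / (2 * δ) else 1 - t - δ / 2

noncomputable def dphiH (δ t : ℝ) : ℝ := -(min (max ((1 - t) / δ) 0) 1)

lemma quad_hasDerivAt (δ s : ℝ) :
    HasDerivAt (fun r : ℝ => (1 - r) ^ 2 / (2 * δ)) (-((1 - s) / δ)) s := by
  have h : HasDerivAt (fun r : ℝ => (1 - r) ^ 2) ((2 : ℕ) * (1 - s) ^ 1 * (-1)) s :=
    (((hasDerivAt_id s).const_sub 1)).pow 2
  have := h.div_const (2 * δ)
  refine this.congr_deriv ?_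
  by_cases hδ : δ = 0
  · simp [hδ]
  · field_simp
    ring

lemma phiH_eq_quad {δ : ℝ} (hδ : 0 < δ) {s : ℝ} (hs : s ∈ Set.Icc (1 - δ) 1) :
    phiH δ s = (1 - s) ^ 2 / (2 * δ) := by
  rcases hs with ⟨h1, h2⟩
  rcases eq_or_lt_of_le h1 with h | h
  · rw [phiH, if_neg (by linarith), if_neg (by linarith)]
    rw [← h]; field_simp; ring
  · rw [phiH, if_neg (by linarith), if_pos h]

lemma phiH_eq_zero {δ : ℝ} (hδ : 0 < δ) {s : ℝ} (hs : s ∈ Set.Ici (1 : ℝ)) :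
    phiH δ s = 0 := by
  rcases eq_or_lt_of_le (Set.mem_Ici.1 hs) with h | h
  · rw [phiH, if_neg (by linarith), if_pos (by linarith)]
    rw [← h]; simp
  · rw [phiH, if_pos h]

lemma phiH_eq_lin {δ : ℝ} (hδ : 0 < δ) {s : ℝ} (hs : s ∈ Set.Iic (1 - δ)) :
    phiH δ s = 1 - s - δ / 2 := by
  rw [phiH, if_neg (by simp at hs; linarith), if_neg (by simpa using hs)]

lemma phiH_hasDerivAt {δ : ℝ} (hδ : 0 < δ) (t : ℝ) :
    HasDerivAt (phiH δ) (dphiH δ t) t := by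
  rcases lt_trichotomy 1 t with h1 | h1 | h1
  · -- t > 1
    have hval : dphiH δ t = 0 := by
      rw [dphiH, max_eq_right (div_nonpos_of_nonpos_of_nonneg (by linarith) hδ.le),
        min_eq_left zero_le_one, neg_zero]
    rw [hval]
    refine (hasDerivAt_const t (0:ℝ)).congr_of_eventuallyEq ?_
    filter_upwards [Ioi_mem_nhds h1] with s hs
    exact phiH_eq_zero hδ (Set.mem_Ici.2 (le_of_lt hs))
  · -- t = 1
    subst h1
    have hval : dphiH δ 1 = 0 := by
      rw [dphiH]; norm_num
    rw [hval]
    have hq : HasDerivWithinAt (phiH δ) (-((1 - (1:ℝ)) / δ)) (Set.Icc (1 - δ) 1) 1 := by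
      refine ((quad_hasDerivAt δ 1).hasDerivWithinAt).congr
        (fun s hs => phiH_eq_quad hδ hs) (phiH_eq_quad hδ ?_)
      exact ⟨by linarith, le_rfl⟩
    have h0 : HasDerivWithinAt (phiH δ) (-((1 - (1:ℝ)) / δ)) (Set.Ici (1:ℝ)) 1 := by
      have : HasDerivWithinAt (fun _ : ℝ => (0:ℝ)) (-((1 - (1:ℝ)) / δ)) (Set.Ici (1:ℝ)) 1 := by
        simpa using (hasDerivAt_const (1:ℝ) (0:ℝ)).hasDerivWithinAt
      exact this.congr (fun s hs => phiH_eq_zero hδ hs) (phiH_eq_zero hδ (by exact Set.self_mem_Ici))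
    have := (hq.union h0).hasDerivAt (by
      rw [Set.Icc_union_Ici_eq_Ici (by linarith)]
      exact Ici_mem_nhds (by linarith))
    simpa using this
  · -- t < 1
    rcases lt_trichotomy (1 - δ) t with h2 | h2 | h2
    · -- 1 - δ < t < 1
      have hval : dphiH δ t = -((1 - t) / δ) := by
        rw [dphiH, max_eq_left (div_nonneg (by linarith) hδ.le),
          min_eq_left ((div_le_one hδ).2 (by linarith))]
      rw [hval]
      refine (quad_hasDerivAt δ t).congr_of_eventuallyEq ?_
      filter_upwards [Ioo_mem_nhds h2 h1] with s hs
      exact phiH_eq_quad hδ ⟨hs.1.le, hs.2.le⟩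
    · -- t = 1 - δ
      subst h2
      have hval : dphiH δ (1 - δ) = -1 := by
        rw [dphiH]
        rw [show (1 - (1 - δ)) / δ = 1 by field_simp; ring]
        norm_num
      rw [hval]
      have hq : HasDerivWithinAt (phiH δ) (-1 : ℝ) (Set.Icc (1 - δ) 1) (1 - δ) := by
        have := (quad_hasDerivAt δ (1 - δ)).hasDerivWithinAt
          (s := Set.Icc (1 - δ) 1)
        rw [show -((1 - (1 - δ)) / δ) = -1 by field_simp; ring] at this
        exact this.congr (fun s hs => phiH_eq_quad hδ hs)
          (phiH_eq_quad hδ ⟨le_rfl, by linarith⟩)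
      have hl : HasDerivWithinAt (phiH δ) (-1 : ℝ) (Set.Iic (1 - δ)) (1 - δ) := by
        have : HasDerivAt (fun s : ℝ => 1 - s - δ / 2) (-1) (1 - δ) := by
          simpa using (((hasDerivAt_id (1 - δ)).const_sub 1).sub_const (δ / 2))
        exact this.hasDerivWithinAt.congr (fun s hs => phiH_eq_lin hδ hs)
          (phiH_eq_lin hδ (by exact Set.self_mem_Iic))
      exact (hl.union hq).hasDerivAt (by
        rw [Set.Iic_union_Icc_eq_Iic (by linarith)]
        exact Iic_mem_nhds (by linarith))
    · -- t < 1 - δ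
      have hval : dphiH δ t = -1 := by
        rw [dphiH, max_eq_left (div_nonneg (by linarith) hδ.le),
          min_eq_right ((one_le_div hδ).2 (by linarith))]
      rw [hval]
      have : HasDerivAt (fun s : ℝ => 1 - s - δ / 2) (-1) t := by
        simpa using (((hasDerivAt_id t).const_sub 1).sub_const (δ / 2))
      refine this.congr_of_eventuallyEq ?_
      filter_upwards [Iio_mem_nhds h2] with s hs
      exact phiH_eq_lin hδ (Set.mem_Iic.2 (le_of_lt hs))

lemma dphiH_mono {δ : ℝ} (hδ : 0 < δ) : Monotone (dphiH δ) := by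
  intro s t hst
  rw [dphiH, dphiH, neg_le_neg_iff]
  have : (1 - t) / δ ≤ (1 - s) / δ := by
    apply div_le_div_of_nonneg_right (by linarith) hδ.le
  exact min_le_min (max_le_max this le_rfl) le_rfl

lemma dphiH_lipschitz {δ : ℝ} (hδ : 0 < δ) (s t : ℝ) :
    |dphiH δ s - dphiH δ t| ≤ |s - t| / δ := by
  rw [dphiH, dphiH]
  have h1 : |min (max ((1 - s) / δ) 0) 1 - min (max ((1 - t) / δ) 0) 1|
      ≤ |max ((1 - s) / δ) 0 - max ((1 - t) / δ) 0| := by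
    refine (abs_min_sub_min_le_max _ _ _ _).trans ?_
    simp
  have h2 : |max ((1 - s) / δ) 0 - max ((1 - t) / δ) 0| ≤ |(1 - s) / δ - (1 - t) / δ| :=
    abs_max_sub_max_le_abs _ _ _
  have h3 : |(1 - s) / δ - (1 - t) / δ| = |s - t| / δ := by
    rw [div_sub_div_same, abs_div, abs_of_pos hδ]
    congr 1
    rw [show (1 - s) - (1 - t) = -(s - t) by ring, abs_neg]
  calc |-(min (max ((1 - s) / δ) 0) 1) - -(min (max ((1 - t) / δ) 0) 1)|
      = |min (max ((1 - s) / δ) 0) 1 - min (max ((1 - t) / δ) 0) 1| := by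
        rw [show -(min (max ((1 - s) / δ) 0) 1) - -(min (max ((1 - t) / δ) 0) 1)
          = -((min (max ((1 - s) / δ) 0) 1) - (min (max ((1 - t) / δ) 0) 1)) by ring, abs_neg]
    _ ≤ |(1 - s) / δ - (1 - t) / δ| := h1.trans h2
    _ = |s - t| / δ := h3

lemma phiH_convexOn {δ : ℝ} (hδ : 0 < δ) : ConvexOn ℝ Set.univ (phiH δ) := by
  have hd : ∀ t, HasDerivAt (phiH δ) (dphiH δ t) t := phiH_hasDerivAt hδ
  have hdiff : Differentiable ℝ (phiH δ) := fun t => (hd t).differentiableAt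
  have hder : deriv (phiH δ) = dphiH δ := funext fun t => (hd t).deriv
  exact Monotone.convexOn_univ_of_deriv hdiff (hder ▸ dphiH_mono hδ)

lemma convexOn_finset_sum {ι E : Type*} [AddCommGroup E] [Module ℝ E]
    (s : Finset ι) (F : ι → E → ℝ) (h : ∀ i ∈ s, ConvexOn ℝ Set.univ (F i)) :
    ConvexOn ℝ Set.univ (fun u => ∑ i ∈ s, F i u) := by
  classical
  induction s using Finset.induction_on with
  | empty => simpa using convexOn_const (0 : ℝ) convex_univ
  | @insert a s has ih =>
    simp only [Finset.sum_insert has]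
    exact (h _ (Finset.mem_insert_self _ _)).add
      (ih fun i hi => h i (Finset.mem_insert_of_mem hi))

/-- the B-HSVM loss `f(b,w) = (1/n) ∑ φ_H(y_i (b + xᵢᵀ w))`,
viewed as a function of `u = (b; w) ∈ ℝ^{p+1}` (with `b = u 0` and
`w_j = u j.succ`), is convex and differentiable, and its gradient is
Lipschitz continuous with constant `L_f = (1/(nδ)) ∑ yᵢ² (1 + ‖xᵢ‖²)`. -/
theorem bhsvm_loss_convex_diff_lipschitz_grad (n p : ℕ) (hn : 0 < n)
    (δ : ℝ) (hδ : 0 < δ)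
    (x : Fin n → EuclideanSpace ℝ (Fin p)) (y : Fin n → ℝ)
    (hy : ∀ i, y i = 1 ∨ y i = -1)
    (f : EuclideanSpace ℝ (Fin (p + 1)) → ℝ)
    (hf : ∀ u, f u =
      (1 / (n : ℝ)) * ∑ i, phiH δ (y i * (u 0 + ∑ j : Fin p, x i j * u j.succ)))
    (Lf : ℝ) (hLf : Lf = (1 / ((n : ℝ) * δ)) * ∑ i, (y i) ^ 2 * (1 + ‖x i‖ ^ 2)) :
    ConvexOn ℝ Set.univ f ∧
    ∃ gradf : EuclideanSpace ℝ (Fin (p + 1)) → EuclideanSpace ℝ (Fin (p + 1)),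
      (∀ u, HasGradientAt f (gradf u) u) ∧
      ∀ u uhat, ‖gradf u - gradf uhat‖ ≤ Lf * ‖u - uhat‖ := by
  classical
  have hn' : (n : ℝ) ≠ 0 := Nat.cast_ne_zero.2 hn.ne'
  set a : Fin n → EuclideanSpace ℝ (Fin (p + 1)) :=
    fun i => WithLp.toLp 2 (fun j => Fin.cases (y i) (fun k => y i * x i k) j) with ha
  have hinner : ∀ i (u : EuclideanSpace ℝ (Fin (p + 1))),
      ⟪a i, u⟫ = y i * (u 0 + ∑ j : Fin p, x i j * u j.succ) := by
    intro i u
    rw [PiLp.inner_apply]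
    simp only [RCLike.inner_apply, conj_trivial]
    rw [Fin.sum_univ_succ]
    simp only [ha, Fin.cases_zero, Fin.cases_succ]
    rw [mul_add, Finset.mul_sum]
    congr 1
    · ring
    exact Finset.sum_congr rfl fun k _ => by ring
  have hnorm : ∀ i, ‖a i‖ ^ 2 = y i ^ 2 * (1 + ‖x i‖ ^ 2) := by
    intro i
    rw [← real_inner_self_eq_norm_sq, ← real_inner_self_eq_norm_sq (x i),
      PiLp.inner_apply, PiLp.inner_apply]
    simp only [RCLike.inner_apply, conj_trivial]
    rw [Fin.sum_univ_succ]
    simp only [ha, Fin.cases_zero, Fin.cases_succ]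
    rw [show (∑ k : Fin p, (y i * x i k) * (y i * x i k))
        = y i ^ 2 * ∑ k : Fin p, x i k * x i k by
      rw [Finset.mul_sum]; exact Finset.sum_congr rfl fun k _ => by ring]
    ring
  have hf' : f = fun u => (1 / (n : ℝ)) * ∑ i, phiH δ ⟪a i, u⟫ := by
    funext u
    rw [hf]
    congr 1
    exact Finset.sum_congr rfl fun i _ => by rw [hinner]
  subst hf'
  constructor
  · -- convexity
    have hsum : ConvexOn ℝ Set.univ (fun u : EuclideanSpace ℝ (Fin (p + 1)) =>
        ∑ i, phiH δ ⟪a i, u⟫) := by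
      refine convexOn_finset_sum _ _ fun i _ => ?_
      have := (phiH_convexOn hδ).comp_affineMap
        ((innerSL ℝ (a i)).toLinearMap.toAffineMap)
      simpa [Function.comp_def, innerSL_apply_apply] using this
    have := hsum.smul (c := 1 / (n : ℝ)) (by positivity)
    simpa [smul_eq_mul] using this
  · -- gradient
    set gradf : EuclideanSpace ℝ (Fin (p + 1)) → EuclideanSpace ℝ (Fin (p + 1)) :=
      fun u => (1 / (n : ℝ)) • ∑ i, dphiH δ ⟪a i, u⟫ • a i with hg
    refine ⟨gradf, fun u => ?_, fun u uhat => ?_⟩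
    · rw [hasGradientAt_iff_hasFDerivAt]
      have hterm : ∀ i : Fin n, HasFDerivAt (fun u' => phiH δ ⟪a i, u'⟫)
          (dphiH δ ⟪a i, u⟫ • innerSL ℝ (a i)) u := by
        intro i
        have := (phiH_hasDerivAt hδ (⟪a i, u⟫)).comp_hasFDerivAt u
          (innerSL ℝ (a i)).hasFDerivAt
        simpa [Function.comp_def, innerSL_apply_apply] using this
      have hsum := HasFDerivAt.fun_sum (u := Finset.univ) fun i _ => hterm i
      have hmul := hsum.const_mul (1 / (n : ℝ))
      refine hmul.congr_fderiv ?_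
      ext w
      simp [hg, InnerProductSpace.toDual_apply_apply, sum_inner, real_inner_smul_left,
        ContinuousLinearMap.sum_apply, innerSL_apply_apply, Finset.mul_sum, smul_eq_mul]
    · -- Lipschitz
      have key : gradf u - gradf uhat
          = (1 / (n : ℝ)) • ∑ i, (dphiH δ ⟪a i, u⟫ - dphiH δ ⟪a i, uhat⟫) • a i := by
        rw [hg]
        rw [← smul_sub, ← Finset.sum_sub_distrib]
        congr 1
        exact Finset.sum_congr rfl fun i _ => (sub_smul _ _ _).symm
      rw [key]
      have hb : ∀ i : Fin n,
          ‖(dphiH δ ⟪a i, u⟫ - dphiH δ ⟪a i, uhat⟫) • a i‖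
            ≤ (‖a i‖ ^ 2 / δ) * ‖u - uhat‖ := by
        intro i
        rw [norm_smul, Real.norm_eq_abs]
        have h1 : |dphiH δ ⟪a i, u⟫ - dphiH δ ⟪a i, uhat⟫|
            ≤ |⟪a i, u⟫ - ⟪a i, uhat⟫| / δ := dphiH_lipschitz hδ _ _
        have h2 : |⟪a i, u⟫ - ⟪a i, uhat⟫| ≤ ‖a i‖ * ‖u - uhat‖ := by
          rw [← inner_sub_right]
          exact abs_real_inner_le_norm _ _
        calc |dphiH δ ⟪a i, u⟫ - dphiH δ ⟪a i, uhat⟫| * ‖a i‖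
            ≤ (‖a i‖ * ‖u - uhat‖ / δ) * ‖a i‖ := by
              apply mul_le_mul_of_nonneg_right _ (norm_nonneg _)
              exact h1.trans (div_le_div_of_nonneg_right h2 hδ.le)
          _ = (‖a i‖ ^ 2 / δ) * ‖u - uhat‖ := by ring
      calc ‖(1 / (n : ℝ)) • ∑ i, (dphiH δ ⟪a i, u⟫ - dphiH δ ⟪a i, uhat⟫) • a i‖
          = (1 / (n : ℝ)) * ‖∑ i, (dphiH δ ⟪a i, u⟫ - dphiH δ ⟪a i, uhat⟫) • a i‖ := by
            rw [norm_smul, Real.norm_eq_abs, abs_of_pos (by positivity)]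
        _ ≤ (1 / (n : ℝ)) * ∑ i, ‖(dphiH δ ⟪a i, u⟫ - dphiH δ ⟪a i, uhat⟫) • a i‖ := by
            apply mul_le_mul_of_nonneg_left (norm_sum_le _ _) (by positivity)
        _ ≤ (1 / (n : ℝ)) * ∑ i, (‖a i‖ ^ 2 / δ) * ‖u - uhat‖ := by
            apply mul_le_mul_of_nonneg_left (Finset.sum_le_sum fun i _ => hb i) (by positivity)
        _ = Lf * ‖u - uhat‖ := by
            rw [hLf]
            have hs : ∑ i, (‖a i‖ ^ 2 / δ) * ‖u - uhat‖
                = (∑ i, y i ^ 2 * (1 + ‖x i‖ ^ 2)) / δ * ‖u - uhat‖ := by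
              rw [Finset.sum_div, Finset.sum_mul]
              exact Finset.sum_congr rfl fun i _ => by rw [hnorm i]
            rw [hs]
            field_simp
end

section
/- Let z ∈ ℝ^J and λ > 0. There exists σ* ∈ [z_min − λ, z_max + λ] (z_min, z_max the smallest and largest entries of z) such that eᵀS_λ(z − σ* e) = 0, and for any such σ*, the vector w* = S_λ(z − σ* e) is the unique minimizer of (1/2)‖w − z‖² + λ‖w‖₁ over {w ∈ ℝ^J : eᵀw = 0}. -/
/-- The soft-thresholding (shrinkage) operator `S_λ(t) = sign(t) max(|t|-λ, 0)`. -/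
noncomputable def soft (lam t : ℝ) : ℝ := Real.sign t * max (|t| - lam) 0

lemma soft_eq (lam t : ℝ) (h : 0 ≤ lam) :
    soft lam t = max (t - lam) 0 - max (-t - lam) 0 := by
  unfold soft
  rcases lt_trichotomy t 0 with ht | ht | ht
  · rw [Real.sign_of_neg ht, abs_of_neg ht]
    rw [max_eq_right (by linarith : t - lam ≤ 0)]
    ring
  · subst ht; simp [Real.sign_zero, max_eq_right (by linarith : -(0:ℝ) - lam ≤ 0),
      max_eq_right (by linarith : (0:ℝ) - lam ≤ 0)]
  · rw [Real.sign_of_pos ht, abs_of_pos ht]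
    rw [max_eq_right (by linarith : -t - lam ≤ 0)]
    ring

lemma soft_nonneg (lam t : ℝ) (hlam : 0 ≤ lam) (ht : 0 ≤ t) : 0 ≤ soft lam t := by
  rw [soft_eq _ _ hlam, max_eq_right (by linarith : -t - lam ≤ 0)]
  simp [le_max_right]

lemma soft_nonpos (lam t : ℝ) (hlam : 0 ≤ lam) (ht : t ≤ 0) : soft lam t ≤ 0 := by
  rw [soft_eq _ _ hlam, max_eq_right (by linarith : t - lam ≤ 0)]
  simp [le_max_right]

lemma soft_key' (lam t x : ℝ) (hlam : 0 < lam) :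
    1/2 * (soft lam t - t)^2 + lam * |soft lam t| + 1/2 * (x - soft lam t)^2
      ≤ 1/2 * (x - t)^2 + lam * |x| := by
  rcases lt_trichotomy t lam with h1 | h1 | h1
  · rcases lt_trichotomy t (-lam) with h2 | h2 | h2
    · have hs : soft lam t = t + lam := by
        rw [soft_eq _ _ hlam.le, max_eq_right (by linarith : t - lam ≤ 0),
          max_eq_left (by linarith : (0:ℝ) ≤ -t - lam)]; ring
      rw [hs, abs_of_neg (by linarith : t + lam < 0)]
      nlinarith [neg_abs_le x]
    · have hs : soft lam t = 0 := by
        rw [soft_eq _ _ hlam.le, max_eq_right (by linarith : t - lam ≤ 0),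
          max_eq_right (by linarith : -t - lam ≤ 0)]; ring
      rw [hs]; simp only [abs_zero]
      have : t * x ≤ lam * |x| := by
        rcases le_or_gt 0 x with hx | hx
        · rw [abs_of_nonneg hx]; nlinarith
        · rw [abs_of_neg hx]; nlinarith
      nlinarith
    · have hs : soft lam t = 0 := by
        rw [soft_eq _ _ hlam.le, max_eq_right (by linarith : t - lam ≤ 0),
          max_eq_right (by linarith : -t - lam ≤ 0)]; ring
      rw [hs]; simp only [abs_zero]
      have : t * x ≤ lam * |x| := by
        rcases le_or_gt 0 x with hx | hx
        · rw [abs_of_nonneg hx]; nlinarith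
        · rw [abs_of_neg hx]; nlinarith
      nlinarith
  · have hs : soft lam t = 0 := by
      rw [soft_eq _ _ hlam.le, max_eq_right (by linarith : t - lam ≤ 0),
        max_eq_right (by linarith : -t - lam ≤ 0)]; ring
    rw [hs]; simp only [abs_zero]
    have : t * x ≤ lam * |x| := by
      rcases le_or_gt 0 x with hx | hx
      · rw [abs_of_nonneg hx]; nlinarith
      · rw [abs_of_neg hx]; nlinarith
    nlinarith
  · have hs : soft lam t = t - lam := by
      rw [soft_eq _ _ hlam.le, max_eq_left (by linarith : (0:ℝ) ≤ t - lam),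
        max_eq_right (by linarith : -t - lam ≤ 0)]; ring
    rw [hs, abs_of_pos (by linarith : (0:ℝ) < t - lam)]
    nlinarith [le_abs_self x]

lemma soft_key (lam σ a x : ℝ) (hlam : 0 < lam) :
    1/2 * (soft lam (a - σ) - a)^2 + lam * |soft lam (a - σ)| + σ * soft lam (a - σ)
      + 1/2 * (x - soft lam (a - σ))^2
    ≤ 1/2 * (x - a)^2 + lam * |x| + σ * x := by
  nlinarith [soft_key' lam (a - σ) x hlam]

/-- the ℓ₁-regularized projection subproblem with a zero-sum
constraint.  There is `σ* ∈ [z_min - λ, z_max + λ]` with `eᵀ S_λ(z - σ* e) = 0`,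
and for any such `σ*` the vector `w* = S_λ(z - σ* e)` is the unique minimizer
of `(1/2)‖w - z‖² + λ‖w‖₁` over `{w : eᵀ w = 0}`. -/
theorem shrinkage_dual_solution (J : ℕ) (hJ : 0 < J)
    (z : EuclideanSpace ℝ (Fin J)) (lam : ℝ) (hlam : 0 < lam) :
    (∃ σ ∈ Set.Icc
        (Finset.univ.inf' ⟨⟨0, hJ⟩, Finset.mem_univ _⟩ (fun j => z j) - lam)
        (Finset.univ.sup' ⟨⟨0, hJ⟩, Finset.mem_univ _⟩ (fun j => z j) + lam),
      ∑ j : Fin J, soft lam (z j - σ) = 0) ∧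
    ∀ σ : ℝ, (∑ j : Fin J, soft lam (z j - σ) = 0) →
      ∀ wstar : EuclideanSpace ℝ (Fin J), (∀ j, wstar j = soft lam (z j - σ)) →
        (∑ j, wstar j = 0) ∧
        ∀ w : EuclideanSpace ℝ (Fin J), (∑ j, w j = 0) → w ≠ wstar →
          1 / 2 * ‖wstar - z‖ ^ 2 + lam * ∑ j, |wstar j| <
          1 / 2 * ‖w - z‖ ^ 2 + lam * ∑ j, |w j| := by
  have hne : (Finset.univ : Finset (Fin J)).Nonempty := ⟨⟨0, hJ⟩, Finset.mem_univ _⟩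
  set m := Finset.univ.inf' ⟨⟨0, hJ⟩, Finset.mem_univ _⟩ (fun j => z j) with hm
  set M := Finset.univ.sup' ⟨⟨0, hJ⟩, Finset.mem_univ _⟩ (fun j => z j) with hM
  have hmle : ∀ j, m ≤ z j := fun j => Finset.inf'_le _ (Finset.mem_univ j)
  have hleM : ∀ j, z j ≤ M := fun j => Finset.le_sup' _ (Finset.mem_univ j)
  constructor
  · -- existence via IVT
    set f : ℝ → ℝ := fun σ => ∑ j : Fin J, soft lam (z j - σ) with hf
    have hcont : Continuous f := by
      apply continuous_finset_sum
      intro j _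
      have heq : (fun σ : ℝ => soft lam (z j - σ)) =
          fun σ => max (z j - σ - lam) 0 - max (-(z j - σ) - lam) 0 := by
        funext σ; rw [soft_eq _ _ hlam.le]
      rw [heq]
      exact ((continuous_const.sub continuous_id).sub continuous_const).max
        continuous_const |>.sub
        (((continuous_const.sub continuous_id).neg.sub continuous_const).max
          continuous_const)
    have hab : m - lam ≤ M + lam := by
      have := le_trans (hmle ⟨0, hJ⟩) (hleM ⟨0, hJ⟩)
      linarith
    have hfa : 0 ≤ f (m - lam) := by
      apply Finset.sum_nonneg
      intro j _
      exact soft_nonneg _ _ hlam.le (by have := hmle j; linarith)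
    have hfb : f (M + lam) ≤ 0 := by
      apply Finset.sum_nonpos
      intro j _
      exact soft_nonpos _ _ hlam.le (by have := hleM j; linarith)
    have hsub := intermediate_value_Icc' hab hcont.continuousOn
    obtain ⟨σ, hσmem, hσeq⟩ := hsub ⟨hfb, hfa⟩
    exact ⟨σ, hσmem, hσeq⟩
  · intro σ hσ wstar hw
    have hws : ∑ j, wstar j = 0 := by
      rw [Finset.sum_congr rfl (fun j _ => hw j)]; exact hσ
    refine ⟨hws, ?_⟩
    intro w hw0 hwne
    have hnorm : ∀ v : EuclideanSpace ℝ (Fin J), ‖v - z‖ ^ 2 = ∑ j, (v j - z j) ^ 2 := by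
      intro v
      rw [EuclideanSpace.norm_eq, Real.sq_sqrt (by positivity)]
      refine Finset.sum_congr rfl fun j _ => ?_
      simp [Real.norm_eq_abs, sq_abs]
    have hkey : ∀ j : Fin J,
        1/2 * (wstar j - z j)^2 + lam * |wstar j| + σ * wstar j
          + 1/2 * (w j - wstar j)^2
        ≤ 1/2 * (w j - z j)^2 + lam * |w j| + σ * w j := by
      intro j
      rw [hw j]
      exact soft_key lam σ (z j) (w j) hlam
    have hsum := Finset.sum_le_sum (fun j (_ : j ∈ Finset.univ) => hkey j)
    rw [show (∑ j, (1/2 * (wstar j - z j)^2 + lam * |wstar j| + σ * wstar j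
          + 1/2 * (w j - wstar j)^2))
        = 1/2 * ∑ j, (wstar j - z j)^2 + lam * ∑ j, |wstar j|
          + σ * ∑ j, wstar j + 1/2 * ∑ j, (w j - wstar j)^2 by
      simp only [Finset.sum_add_distrib, Finset.mul_sum]] at hsum
    rw [show (∑ j, (1/2 * (w j - z j)^2 + lam * |w j| + σ * w j))
        = 1/2 * ∑ j, (w j - z j)^2 + lam * ∑ j, |w j| + σ * ∑ j, w j by
      simp only [Finset.sum_add_distrib, Finset.mul_sum]] at hsum
    have hpos : 0 < ∑ j, (w j - wstar j)^2 := by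
      have hex : ∃ j, w j ≠ wstar j := by
        by_contra hcon
        push_neg at hcon
        exact hwne (PiLp.ext hcon)
      obtain ⟨j0, hj0⟩ := hex
      refine Finset.sum_pos' (fun j _ => sq_nonneg _) ⟨j0, Finset.mem_univ _, ?_⟩
      exact pow_pos (abs_pos.mpr (sub_ne_zero.mpr hj0)) 2 |>.trans_eq (sq_abs _)
    rw [hnorm wstar, hnorm w]
    rw [hws, hw0] at hsum
    linarith
end
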